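/- Fix the shared-seed coordinated sampling setup and a function f : V → ℝ_{≥0}. The J estimator satisfies the invariant: for every v ∈ V and every integer j ≥ 1, f̲(2^{−j+1}, v) = ∫_{2^{−j}}^1 f̂^{(J)}(u,v) du. -/

import Mathlib

open MeasureTheory Set Filter Topology

noncomputable section

/-- A shared-seed coordinated sampling scheme on a data domain `V ⊆ ℝ_{≥0}^r`:
continuous non-decreasing seed-to-threshold maps `τ i : [0,1] → ℝ` whose range
infimum is at most the infimum of the `i`-th coordinate over the domain. -/
structure CoordScheme (r : ℕ) where
  V : Set (Fin r → ℝ)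
  τ : Fin r → ℝ → ℝ
  V_nonneg : ∀ v ∈ V, ∀ i, 0 ≤ v i
  τ_cont : ∀ i, ContinuousOn (τ i) (Set.Icc 0 1)
  τ_mono : ∀ i, MonotoneOn (τ i) (Set.Icc 0 1)
  τ_inf : ∀ i, sInf (τ i '' Set.Icc 0 1) ≤ sInf ((fun v => v i) '' V)

namespace CoordScheme

variable {r : ℕ}

/-- The set `S(u,v)` of sampled entries: `i` is sampled iff `v i ≥ τ i u`. -/
def sampled (C : CoordScheme r) (u : ℝ) (v : Fin r → ℝ) : Set (Fin r) :=
  {i | C.τ i u ≤ v i}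

/-- The consistent set `V*(u,v)` of data vectors consistent with the outcome `S(u,v)`. -/
def Vstar (C : CoordScheme r) (u : ℝ) (v : Fin r → ℝ) : Set (Fin r → ℝ) :=
  {z ∈ C.V | ∀ i, (C.τ i u ≤ v i → z i = v i) ∧ (v i < C.τ i u → z i < C.τ i u)}

/-- The lower bound function `f̲(u,v) = inf { f z : z ∈ V*(u,v) }`. -/
def lb (C : CoordScheme r) (f : (Fin r → ℝ) → ℝ) (u : ℝ) (v : Fin r → ℝ) : ℝ :=
  sInf (f '' C.Vstar u v)

/-- An estimator: an integrable function of the outcome (it takes equal values on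
data vectors consistent with the same outcome). -/
structure IsEstimator (C : CoordScheme r) (fhat : ℝ → (Fin r → ℝ) → ℝ) : Prop where
  integrable : ∀ v ∈ C.V, IntegrableOn (fun u => fhat u v) (Set.Ioc (0:ℝ) 1)
  consistent : ∀ u ∈ Set.Ioc (0:ℝ) 1, ∀ v ∈ C.V, ∀ z ∈ C.Vstar u v, fhat u v = fhat u z

/-- A nonnegative estimator. -/
def Nonneg (C : CoordScheme r) (fhat : ℝ → (Fin r → ℝ) → ℝ) : Prop :=
  ∀ u ∈ Set.Ioc (0:ℝ) 1, ∀ v ∈ C.V, 0 ≤ fhat u v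

/-- An unbiased estimator of `f`. -/
def Unbiased (C : CoordScheme r) (f : (Fin r → ℝ) → ℝ)
    (fhat : ℝ → (Fin r → ℝ) → ℝ) : Prop :=
  ∀ v ∈ C.V, (∫ u in Set.Ioc (0:ℝ) 1, fhat u v) = f v

end CoordScheme

/-- Lower convex hull of `g` on `(0,1]`: the pointwise largest convex function
bounded above by `g` there. -/
def lowerHull (g : ℝ → ℝ) (u : ℝ) : ℝ :=
  sSup {y : ℝ | ∃ h : ℝ → ℝ, ConvexOn ℝ (Set.Ioc (0:ℝ) 1) h ∧
      (∀ x ∈ Set.Ioc (0:ℝ) 1, h x ≤ g x) ∧ y = h u}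

namespace CoordScheme

variable {r : ℕ}

/-- The `v`-optimal estimates: the negated derivative of the lower hull of the
lower-bound function `u ↦ f̲(u,v)`. -/
def optEst (C : CoordScheme r) (f : (Fin r → ℝ) → ℝ) (v : Fin r → ℝ) (u : ℝ) : ℝ :=
  -deriv (lowerHull (fun x => C.lb f x v)) u

/-- Cumulative integral `∫_{2^{-j}}^1` of the J estimator (by its defining recursion):
`Jint (j+1) = Jint j + (value on `(2^{-j-1},2^{-j}]`) ⬝ 2^{-j-1}`. -/
def Jint (C : CoordScheme r) (f : (Fin r → ℝ) → ℝ) (v : Fin r → ℝ) : ℕ → ℝ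
  | 0 => 0
  | (j+1) => Jint C f v j +
      ((2:ℝ) ^ (j+1) * (C.lb f ((2:ℝ) ^ (-(j:ℤ))) v - Jint C f v j)) * (2:ℝ) ^ (-(j:ℤ) - 1)

/-- The (constant) value of the J estimator on the dyadic interval `(2^{-j-1}, 2^{-j}]`.
For `j = 0` this is `2 ⬝ f̲(1,v)`; for `j ≥ 1` it is
`2^{j+1} ⬝ ( f̲(2^{-j},v) − ∫_{2^{-j}}^1 f̂⁽ᴶ⁾(x,v) dx )`. -/
def Jval (C : CoordScheme r) (f : (Fin r → ℝ) → ℝ) (v : Fin r → ℝ) (j : ℕ) : ℝ :=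
  (2:ℝ) ^ (j+1) * (C.lb f ((2:ℝ) ^ (-(j:ℤ))) v - Jint C f v j)

/-- The J estimator `f̂⁽ᴶ⁾(u,v)`: on `u ∈ (2^{-j-1}, 2^{-j}]` it takes the value `Jval j`. -/
def Jest (C : CoordScheme r) (f : (Fin r → ℝ) → ℝ) (u : ℝ) (v : Fin r → ℝ) : ℝ :=
  C.Jval f v ⌊-Real.logb 2 u⌋₊

end CoordScheme


private theorem myfloor (j : ℕ) (u : ℝ) (h1 : (2:ℝ) ^ (-(j:ℤ)-1) < u) (h2 : u ≤ (2:ℝ) ^ (-(j:ℤ))) :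
    ⌊-Real.logb 2 u⌋₊ = j := by
  have hu : (0:ℝ) < u := lt_trans (by positivity) h1
  have hb : (1:ℝ) < 2 := one_lt_two
  have hu1 : u ≤ 1 := h2.trans (zpow_le_one_of_nonpos₀ hb.le (by simp))
  rw [Nat.floor_eq_iff (by
    rw [neg_nonneg]
    exact Real.logb_nonpos hb hu.le hu1)]
  constructor
  · rw [le_neg, Real.logb_le_iff_le_rpow hb hu]
    calc u ≤ (2:ℝ)^(-(j:ℤ)) := h2
      _ = (2:ℝ)^(-(j:ℕ):ℝ) := by rw [← Real.rpow_intCast]; norm_num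
  · rw [neg_lt, Real.lt_logb_iff_rpow_lt hb hu]
    calc (2:ℝ)^(-((j:ℕ)+1:ℝ)) = (2:ℝ)^(-(j:ℤ)-1) := by
          rw [← Real.rpow_intCast]; norm_num; ring_nf
      _ < u := h1

private theorem key {r : ℕ} (C : CoordScheme r) (f : (Fin r → ℝ) → ℝ) (v : Fin r → ℝ) :
    ∀ j : ℕ, IntegrableOn (fun u => C.Jest f u v) (Set.Ioc ((2:ℝ) ^ (-(j:ℤ))) 1) ∧
      (∫ u in Set.Ioc ((2:ℝ) ^ (-(j:ℤ))) 1, C.Jest f u v) = C.Jint f v j := by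
  intro j
  induction j with
  | zero =>
    simp [CoordScheme.Jint]
  | succ j ih =>
    set a : ℝ := (2:ℝ) ^ (-(j:ℤ)-1) with ha
    set b : ℝ := (2:ℝ) ^ (-(j:ℤ)) with hb
    have hab : a < b := by
      apply zpow_lt_zpow_right₀ one_lt_two; omega
    have hb1 : b ≤ 1 := zpow_le_one_of_nonpos₀ one_le_two (by simp)
    have hexp : (-(((j:ℕ)+1:ℕ)):ℤ) = -(j:ℤ) - 1 := by push_cast; ring
    have hsplit : Set.Ioc a 1 = Set.Ioc a b ∪ Set.Ioc b 1 :=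
      (Set.Ioc_union_Ioc_eq_Ioc hab.le hb1).symm
    have hconst : Set.EqOn (fun u => C.Jest f u v) (fun _ => C.Jval f v j) (Set.Ioc a b) := by
      intro u hu
      simp only [CoordScheme.Jest]
      rw [myfloor j u hu.1 hu.2]
    have hint1 : IntegrableOn (fun u => C.Jest f u v) (Set.Ioc a b) := by
      apply IntegrableOn.congr_fun _ hconst.symm measurableSet_Ioc
      exact integrableOn_const measure_Ioc_lt_top.ne
    have hI1 : (∫ u in Set.Ioc a b, C.Jest f u v) = C.Jval f v j * (2:ℝ) ^ (-(j:ℤ)-1) := by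
      rw [setIntegral_congr_fun measurableSet_Ioc hconst, setIntegral_const]
      have hvol : (volume (Set.Ioc a b)).toReal = b - a := by
        rw [Real.volume_Ioc, ENNReal.toReal_ofReal (by linarith)]
      rw [measureReal_def, hvol, smul_eq_mul, mul_comm]
      congr 1
      rw [ha, hb]
      have : (2:ℝ) ^ (-(j:ℤ)) = 2 * (2:ℝ) ^ (-(j:ℤ)-1) := by
        rw [zpow_sub₀ (two_ne_zero (α := ℝ)), zpow_one]
        ring
      rw [this]; ring
    have hdisj : Disjoint (Set.Ioc a b) (Set.Ioc b 1) := Set.Ioc_disjoint_Ioc_of_le le_rfl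
    constructor
    · rw [hexp, hsplit]
      exact hint1.union ih.1
    · rw [hexp, hsplit,
        setIntegral_union hdisj measurableSet_Ioc hint1 ih.1, hI1, ih.2]
      simp only [CoordScheme.Jint, CoordScheme.Jval]
      ring

/-- the J estimator invariant: for every `v ∈ V` and every `j ≥ 1`,
`f̲(2^{−j+1}, v) = ∫_{2^{−j}}^1 f̂⁽ᴶ⁾(u,v) du`. -/
theorem stmt10 {r : ℕ} (C : CoordScheme r) (f : (Fin r → ℝ) → ℝ)
    (hf : ∀ v ∈ C.V, 0 ≤ f v) :
    ∀ v ∈ C.V, ∀ j : ℕ, 1 ≤ j →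
      C.lb f ((2:ℝ) ^ (-(j:ℤ) + 1)) v =
        ∫ u in Set.Ioc ((2:ℝ) ^ (-(j:ℤ))) 1, C.Jest f u v := by
  intro v hv j hj
  obtain ⟨k, rfl⟩ : ∃ k, j = k + 1 := ⟨j - 1, (Nat.succ_pred_eq_of_pos hj).symm⟩
  rw [(key C f v (k+1)).2]
  have hexp : (-((k:ℕ)+1:ℕ):ℤ) + 1 = -(k:ℤ) := by push_cast; ring
  rw [hexp]
  have hpow : (2:ℝ) ^ (k+1) * (2:ℝ) ^ (-(k:ℤ)-1) = 1 := by
    rw [← zpow_natCast (2:ℝ) (k+1), ← zpow_add₀ (two_ne_zero (α := ℝ))]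
    norm_num
  simp only [CoordScheme.Jint]
  have h2 : (2:ℝ)^(k+1) * (C.lb f ((2:ℝ)^(-(k:ℤ))) v - C.Jint f v k) * (2:ℝ)^(-(k:ℤ)-1)
      = C.lb f ((2:ℝ)^(-(k:ℤ))) v - C.Jint f v k := by
    rw [mul_right_comm, hpow, one_mul]
  rw [h2]; ring
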